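/- For every nonnegative integer n, every nonnegative integer r, and every real x, the extended r-central Bell polynomial satisfies B_n^{(c,r)}(x) = ∑_{k=0}^{n} x^k · (1/k!) (δ^k (y ↦ y^n))(r), where δ^k is the k-th iterate of the central difference operator. -/
import Mathlib


/-- The central difference operator: `(δ f)(x) = f(x + 1/2) - f(x - 1/2)`. -/
noncomputable def cdiff (f : ℝ → ℝ) : ℝ → ℝ := fun x => f (x + 1 / 2) - f (x - 1 / 2)

/-- The extended `r`-central factorial numbers of the second kind:
`T_r(n+r,k+r) = (1/k!) ∑_{j=0}^{k} (-1)^{k-j} C(k,j) (j + r - k/2)^n`. -/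
noncomputable def rcentralT (r n k : ℕ) : ℝ :=
  (1 / (Nat.factorial k : ℝ)) * ∑ j ∈ Finset.range (k + 1),
    (-1 : ℝ) ^ (k - j) * (Nat.choose k j : ℝ) * ((j : ℝ) + (r : ℝ) - (k : ℝ) / 2) ^ n

/-- The extended `r`-central Bell polynomials: `B_n^{(c,r)}(x) = ∑_{k=0}^{n} T_r(n+r,k+r) x^k`. -/
noncomputable def rcentralBell (r n : ℕ) (x : ℝ) : ℝ :=
  ∑ k ∈ Finset.range (n + 1), rcentralT r n k * x ^ k

lemma cdiff_iterate (f : ℝ → ℝ) (k : ℕ) (x : ℝ) :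
    (cdiff^[k] f) x = (-1 : ℝ) ^ k *
      ∑ j ∈ Finset.range (k + 1),
        (-1 : ℝ) ^ j * (Nat.choose k j : ℝ) * f (x + j - k / 2) := by
  induction k generalizing x with
  | zero => simp
  | succ k ih =>
    rw [Function.iterate_succ_apply', cdiff, ih, ih]
    have key : ∑ j ∈ Finset.range (k + 1 + 1),
        (-1 : ℝ) ^ j * (Nat.choose (k+1) j : ℝ) * f (x + j - (k+1) / 2)
        = (∑ j ∈ Finset.range (k + 1),
            (-1 : ℝ) ^ j * (Nat.choose k j : ℝ) * f (x - 1/2 + j - k / 2))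
        - (∑ j ∈ Finset.range (k + 1),
            (-1 : ℝ) ^ j * (Nat.choose k j : ℝ) * f (x + 1/2 + j - k / 2)) := by
      rw [Finset.sum_range_succ' (fun j => (-1 : ℝ) ^ j * (Nat.choose (k+1) j : ℝ) *
        f (x + j - (k+1) / 2)) (k+1)]
      have h1 : ∀ i ∈ Finset.range (k + 1),
          (-1 : ℝ) ^ (i+1) * (Nat.choose (k+1) (i+1) : ℝ) * f (x + (i+1 : ℕ) - (k+1) / 2)
          = -((-1 : ℝ) ^ i * (Nat.choose k i : ℝ) * f (x + 1/2 + i - k / 2))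
            + (-((-1 : ℝ) ^ i * (Nat.choose k (i+1) : ℝ) * f (x - 1/2 + (i+1 : ℕ) - k / 2))) := by
        intro i _
        have e1 : x + ((i:ℝ) + 1) - ((k:ℝ) + 1) / 2 = x + 1/2 + (i:ℝ) - (k:ℝ) / 2 := by ring
        have e2 : x - 1/2 + ((i:ℝ) + 1) - (k:ℝ) / 2 = x + 1/2 + (i:ℝ) - (k:ℝ) / 2 := by ring
        rw [Nat.choose_succ_succ]
        push_cast
        rw [e1, e2]
        ring
      rw [Finset.sum_congr rfl h1, Finset.sum_add_distrib]
      have h2 : ∑ i ∈ Finset.range (k + 1),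
          (-((-1 : ℝ) ^ i * (Nat.choose k (i+1) : ℝ) * f (x - 1/2 + (i+1 : ℕ) - k / 2)))
          + (-1 : ℝ) ^ (0:ℕ) * (Nat.choose (k+1) 0 : ℝ) * f (x + (0:ℕ) - (k+1) / 2)
          = ∑ j ∈ Finset.range (k + 1),
            (-1 : ℝ) ^ j * (Nat.choose k j : ℝ) * f (x - 1/2 + j - k / 2) := by
        rw [Finset.sum_range_succ' (fun j => (-1 : ℝ) ^ j * (Nat.choose k j : ℝ) *
          f (x - 1/2 + j - k / 2)) k]
        rw [Finset.sum_range_succ]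
        simp only [Nat.choose_succ_self, Nat.cast_zero, Nat.choose_zero_right, Nat.cast_one,
          pow_zero, one_mul, mul_zero, zero_mul, neg_zero, add_zero]
        congr 1
        · apply Finset.sum_congr rfl
          intro i _
          push_cast
          ring_nf
        · congr 1
          push_cast; ring
      have h3 : ∑ i ∈ Finset.range (k + 1),
          (-((-1 : ℝ) ^ i * (Nat.choose k i : ℝ) * f (x + 1/2 + i - k / 2)))
          = -∑ i ∈ Finset.range (k + 1),
            ((-1 : ℝ) ^ i * (Nat.choose k i : ℝ) * f (x + 1/2 + i - k / 2)) := by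
        rw [Finset.sum_neg_distrib]
      rw [h3]
      linarith [h2]
    rw [pow_succ]
    push_cast
    rw [key]
    ring

/-- For every nonnegative integer `n`, nonnegative integer `r` and real `x`:
`B_n^{(c,r)}(x) = ∑_{k=0}^{n} x^k · (1/k!)(δ^k (y ↦ y^n))(r)`. -/
theorem rcentralBell_eq_sum_cdiff (n r : ℕ) (x : ℝ) :
    rcentralBell r n x =
      ∑ k ∈ Finset.range (n + 1),
        x ^ k * ((1 / (Nat.factorial k : ℝ)) * (cdiff^[k] (fun y : ℝ => y ^ n)) (r : ℝ)) := by
  unfold rcentralBell rcentralT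
  apply Finset.sum_congr rfl
  intro k _
  rw [cdiff_iterate]
  have hs : ∑ j ∈ Finset.range (k + 1),
      (-1 : ℝ) ^ (k - j) * (Nat.choose k j : ℝ) * ((j : ℝ) + (r : ℝ) - (k : ℝ) / 2) ^ n
      = (-1 : ℝ) ^ k * ∑ j ∈ Finset.range (k + 1),
        (-1 : ℝ) ^ j * (Nat.choose k j : ℝ) * ((r : ℝ) + j - k / 2) ^ n := by
    rw [Finset.mul_sum]
    apply Finset.sum_congr rfl
    intro j hj
    have hj' : j ≤ k := Nat.lt_succ_iff.mp (Finset.mem_range.mp hj)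
    have h := pow_add (-1 : ℝ) (k - j) j
    rw [Nat.sub_add_cancel hj'] at h
    have hsgn : (-1 : ℝ) ^ (k - j) = (-1 : ℝ) ^ k * (-1 : ℝ) ^ j := by
      rw [h, mul_assoc, ← pow_add, ← two_mul, pow_mul]
      norm_num
    have hb : (j : ℝ) + (r : ℝ) - (k : ℝ) / 2 = (r : ℝ) + j - k / 2 := by ring
    rw [hsgn, hb]
    ring
  rw [hs]
  ring
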